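/- arXiv:1910.01606 — 4 statements merged into one kernel-verified Lean document; each statement's English description precedes it below -/
import Mathlib

section
/- For a polynomial V of even degree 2k with positive leading coefficient and any real polynomial P, the function f(λ) = ∫_ℝ P(φ) e^{-φ²/2 - λV(φ)} dφ/√(2π) is analytic on the open half-plane {λ ∈ ℂ : Re λ > 0}, with derivative f'(λ) = ∫_ℝ P(φ)(-V(φ)) e^{-φ²/2 - λV(φ)} dφ/√(2π). -/
open MeasureTheory Real Filter

private lemma poly_gauss_integrable (Q : Polynomial ℝ) :
    Integrable (fun x : ℝ => Q.eval x * Real.exp (-(1/2) * x ^ 2)) := by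
  have key : ∀ n : ℕ, Integrable (fun x : ℝ => x ^ n * Real.exp (-(1/2) * x ^ 2)) := by
    intro n
    have h := integrable_rpow_mul_exp_neg_mul_sq (b := 1/2) (by norm_num) (s := n)
      (neg_one_lt_zero.trans_le (Nat.cast_nonneg n))
    simpa [Real.rpow_natCast] using h
  have heq : (fun x : ℝ => Q.eval x * Real.exp (-(1/2) * x ^ 2))
      = fun x => ∑ i ∈ Finset.range (Q.natDegree + 1),
          Q.coeff i * (x ^ i * Real.exp (-(1/2) * x ^ 2)) := by
    funext x
    rw [Polynomial.eval_eq_sum_range, Finset.sum_mul]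
    exact Finset.sum_congr rfl fun i _ => by ring
  rw [heq]
  exact integrable_finset_sum _ fun i _ => (key i).const_mul _

private lemma poly_bddBelow (k : ℕ) (hk : 1 ≤ k) (V : Polynomial ℝ)
    (hdeg : V.natDegree = 2 * k) (hlead : 0 < V.leadingCoeff) :
    ∃ m : ℝ, ∀ x, m ≤ V.eval x := by
  have hV0 : V ≠ 0 := fun h => by simp [h] at hlead
  have hdeg' : 0 < V.degree := by
    rw [Polynomial.degree_eq_natDegree hV0]
    exact_mod_cast (by omega : 0 < V.natDegree)
  have htop : Tendsto (fun x => V.eval x) atTop atTop :=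
    Polynomial.tendsto_atTop_of_leadingCoeff_nonneg V hdeg' hlead.le
  set W := V.comp (-Polynomial.X) with hW
  have hWeval : ∀ x : ℝ, W.eval x = V.eval (-x) := by intro x; simp [hW]
  have hWdeg : W.natDegree = V.natDegree := by
    rw [hW, Polynomial.natDegree_comp]; simp
  have hWlc : W.leadingCoeff = V.leadingCoeff := by
    rw [hW, Polynomial.leadingCoeff_comp (by simp)]
    simp [hdeg, pow_mul]
  have hW0 : W ≠ 0 := by
    intro h; rw [h] at hWlc; simp [Polynomial.leadingCoeff_zero] at hWlc
    exact hlead.ne hWlc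
  have hWdeg' : 0 < W.degree := by
    rw [Polynomial.degree_eq_natDegree hW0, hWdeg]
    exact_mod_cast (by omega : 0 < V.natDegree)
  have hWtop : Tendsto (fun x => W.eval x) atTop atTop :=
    Polynomial.tendsto_atTop_of_leadingCoeff_nonneg W hWdeg' (hWlc ▸ hlead.le)
  have hbot : Tendsto (fun x => V.eval x) atBot atTop := by
    have := hWtop.comp tendsto_neg_atBot_atTop
    simpa [Function.comp_def, hWeval] using this
  have hco : Tendsto (fun x => V.eval x) (cocompact ℝ) atTop := by
    rw [cocompact_eq_atBot_atTop, tendsto_sup]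
    exact ⟨hbot, htop⟩
  obtain ⟨x, hx⟩ := (V.continuous).exists_forall_le hco
  exact ⟨V.eval x, hx⟩

theorem stmt2 (k : ℕ) (hk : 1 ≤ k) (V P : Polynomial ℝ)
    (hdeg : V.natDegree = 2 * k) (hlead : 0 < V.leadingCoeff)
    (f : ℂ → ℂ)
    (hf : ∀ lam : ℂ, 0 ≤ lam.re → f lam =
      ∫ φ : ℝ, ((P.eval φ : ℝ) : ℂ) *
        Complex.exp (-(φ : ℂ) ^ 2 / 2 - lam * ((V.eval φ : ℝ) : ℂ)) /
          Real.sqrt (2 * π)) :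
    ∀ lam : ℂ, 0 < lam.re →
      AnalyticAt ℂ f lam ∧
      HasDerivAt f
        (∫ φ : ℝ, ((P.eval φ : ℝ) : ℂ) * (-((V.eval φ : ℝ) : ℂ)) *
          Complex.exp (-(φ : ℂ) ^ 2 / 2 - lam * ((V.eval φ : ℝ) : ℂ)) /
            Real.sqrt (2 * π)) lam := by
  obtain ⟨m₀, hm₀⟩ := poly_bddBelow k hk V hdeg hlead
  set m : ℝ := min m₀ 0 with hm_def
  have hm_np : m ≤ 0 := min_le_right _ _
  have hm : ∀ x, m ≤ V.eval x := fun x => (min_le_left _ _).trans (hm₀ x)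
  set F : ℂ → ℝ → ℂ := fun z φ => ((P.eval φ : ℝ) : ℂ) *
      Complex.exp (-(φ : ℂ) ^ 2 / 2 - z * ((V.eval φ : ℝ) : ℂ)) /
        Real.sqrt (2 * π) with hF_def
  set F' : ℂ → ℝ → ℂ := fun z φ => ((P.eval φ : ℝ) : ℂ) * (-((V.eval φ : ℝ) : ℂ)) *
      Complex.exp (-(φ : ℂ) ^ 2 / 2 - z * ((V.eval φ : ℝ) : ℂ)) /
        Real.sqrt (2 * π) with hF'_def
  have hnorm : ∀ (z : ℂ) (φ : ℝ),
      ‖Complex.exp (-(φ : ℂ) ^ 2 / 2 - z * ((V.eval φ : ℝ) : ℂ))‖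
        = Real.exp (-(1/2) * φ ^ 2 - z.re * V.eval φ) := by
    intro z φ
    rw [Complex.norm_exp]
    congr 1
    have h1 : -(φ : ℂ) ^ 2 / 2 - z * ((V.eval φ : ℝ) : ℂ)
        = Complex.ofReal (-(1/2) * φ ^ 2) - z * ((V.eval φ : ℝ) : ℂ) := by
      push_cast; ring
    rw [h1]
    simp [Complex.sub_re, Complex.mul_re, ← Complex.ofReal_pow]
  have hsqrt : (1 : ℝ) ≤ Real.sqrt (2 * π) := by
    rw [show (1:ℝ) = Real.sqrt 1 by simp]
    exact Real.sqrt_le_sqrt (by nlinarith [Real.pi_gt_three])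
  have hcont : ∀ z : ℂ, Continuous (fun φ : ℝ => F z φ) := by
    intro z
    apply Continuous.div_const
    apply Continuous.mul
    · exact Complex.continuous_ofReal.comp P.continuous
    · apply Complex.continuous_exp.comp
      apply Continuous.sub
      · fun_prop
      · exact continuous_const.mul (Complex.continuous_ofReal.comp V.continuous)
  have hcont' : ∀ z : ℂ, Continuous (fun φ : ℝ => F' z φ) := by
    intro z
    apply Continuous.div_const
    apply Continuous.mul
    · exact (Complex.continuous_ofReal.comp P.continuous).mul
        (Complex.continuous_ofReal.comp V.continuous).neg
    · apply Complex.continuous_exp.comp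
      apply Continuous.sub
      · fun_prop
      · exact continuous_const.mul (Complex.continuous_ofReal.comp V.continuous)
  -- the key derivative statement
  have key : ∀ l : ℂ, 0 < l.re →
      HasDerivAt (fun z => ∫ φ : ℝ, F z φ) (∫ φ : ℝ, F' l φ) l := by
    intro l hl
    set ε : ℝ := l.re / 2 with hε_def
    have hε : 0 < ε := by positivity
    set R : ℝ := l.re + ε with hR_def
    have hball : ∀ z ∈ Metric.ball l ε, 0 < z.re ∧ z.re ≤ R := by
      intro z hz
      have h1 : |z.re - l.re| ≤ ‖z - l‖ := by
        simpa using Complex.abs_re_le_norm (z - l)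
      have h2 : ‖z - l‖ < ε := by simpa [dist_eq_norm] using hz
      have := abs_lt.mp (h1.trans_lt h2)
      constructor
      · simp only [hε_def] at this ⊢; linarith [this.1]
      · simp only [hR_def]; linarith [this.2]
    set B : ℝ := Real.exp (R * (-m)) with hB_def
    have hexp_bound : ∀ z : ℂ, 0 < z.re → z.re ≤ R → ∀ φ : ℝ,
        Real.exp (-(1/2) * φ ^ 2 - z.re * V.eval φ)
          ≤ Real.exp (-(1/2) * φ ^ 2) * B := by
      intro z hz1 hz2 φ
      rw [hB_def, ← Real.exp_add]
      apply Real.exp_le_exp.mpr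
      rcases le_or_gt 0 (V.eval φ) with h | h
      · have h1 : -(z.re * V.eval φ) ≤ 0 := by nlinarith
        have h2 : 0 ≤ R * (-m) := by nlinarith [hm (0:ℝ)]
        nlinarith
      · have h1 : z.re * (-(V.eval φ)) ≤ R * (-(V.eval φ)) := by nlinarith
        have h2 : R * (-(V.eval φ)) ≤ R * (-m) := by nlinarith [hm φ]
        nlinarith
    -- bound function
    set bound : ℝ → ℝ :=
      fun φ => ‖(P * V).eval φ * Real.exp (-(1/2) * φ ^ 2)‖ * B with hbound_def
    have hbound_int : Integrable bound :=
      (poly_gauss_integrable (P * V)).norm.mul_const B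
    have hF'_bound : ∀ᵐ φ : ℝ, ∀ z ∈ Metric.ball l ε, ‖F' z φ‖ ≤ bound φ := by
      filter_upwards with φ z hz
      obtain ⟨hz1, hz2⟩ := hball z hz
      have hnn : ‖F' z φ‖
          = |P.eval φ| * |V.eval φ| * Real.exp (-(1/2) * φ ^ 2 - z.re * V.eval φ)
            / Real.sqrt (2 * π) := by
        rw [hF'_def]
        simp only [norm_div, norm_mul, hnorm, Complex.norm_real, norm_neg,
          Real.norm_eq_abs]
        rw [abs_of_nonneg (Real.sqrt_nonneg _)]
      rw [hnn, hbound_def]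
      have h1 : |P.eval φ| * |V.eval φ| * Real.exp (-(1/2) * φ ^ 2 - z.re * V.eval φ)
            / Real.sqrt (2 * π)
          ≤ |P.eval φ| * |V.eval φ| * Real.exp (-(1/2) * φ ^ 2 - z.re * V.eval φ) := by
        apply div_le_self (by positivity) hsqrt
      apply h1.trans
      have h2 := hexp_bound z hz1 hz2 φ
      calc |P.eval φ| * |V.eval φ| * Real.exp (-(1/2) * φ ^ 2 - z.re * V.eval φ)
          ≤ |P.eval φ| * |V.eval φ| * (Real.exp (-(1/2) * φ ^ 2) * B) := by
            apply mul_le_mul_of_nonneg_left h2 (by positivity)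
        _ = ‖(P * V).eval φ * Real.exp (-(1/2) * φ ^ 2)‖ * B := by
            rw [norm_mul, Polynomial.eval_mul, Real.norm_eq_abs, Real.norm_eq_abs,
              abs_mul, abs_of_nonneg (Real.exp_nonneg _)]
            ring
    have hF_int : Integrable (F l) := by
      apply Integrable.mono' ((poly_gauss_integrable P).norm.mul_const B)
        (hcont l).aestronglyMeasurable
      filter_upwards with φ
      have hnn : ‖F l φ‖
          = |P.eval φ| * Real.exp (-(1/2) * φ ^ 2 - l.re * V.eval φ)
            / Real.sqrt (2 * π) := by
        rw [hF_def]
        simp only [norm_div, norm_mul, hnorm, Complex.norm_real, Real.norm_eq_abs]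
        rw [abs_of_nonneg (Real.sqrt_nonneg _)]
      rw [hnn]
      have h1 : |P.eval φ| * Real.exp (-(1/2) * φ ^ 2 - l.re * V.eval φ)
            / Real.sqrt (2 * π)
          ≤ |P.eval φ| * Real.exp (-(1/2) * φ ^ 2 - l.re * V.eval φ) :=
        div_le_self (by positivity) hsqrt
      apply h1.trans
      have h2 := hexp_bound l hl (by simp only [hR_def]; linarith) φ
      calc |P.eval φ| * Real.exp (-(1/2) * φ ^ 2 - l.re * V.eval φ)
          ≤ |P.eval φ| * (Real.exp (-(1/2) * φ ^ 2) * B) :=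
            mul_le_mul_of_nonneg_left h2 (abs_nonneg _)
        _ = ‖P.eval φ * Real.exp (-(1/2) * φ ^ 2)‖ * B := by
            rw [Real.norm_eq_abs, abs_mul, abs_of_nonneg (Real.exp_nonneg _)]; ring
    have h_diff : ∀ᵐ φ : ℝ, ∀ z ∈ Metric.ball l ε,
        HasDerivAt (fun w => F w φ) (F' z φ) z := by
      filter_upwards with φ z _
      have h1 : HasDerivAt (fun w : ℂ => -(φ : ℂ) ^ 2 / 2 - w * ((V.eval φ : ℝ) : ℂ))
          (-((V.eval φ : ℝ) : ℂ)) z := by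
        simpa using ((hasDerivAt_id z).mul_const ((V.eval φ : ℝ) : ℂ)).const_sub
          (-(φ : ℂ) ^ 2 / 2)
      have h2 := h1.cexp
      have h3 := (h2.const_mul ((P.eval φ : ℝ) : ℂ)).div_const
        ((Real.sqrt (2 * π) : ℝ) : ℂ)
      refine HasDerivAt.congr_deriv h3 ?_
      rw [hF'_def]
      ring
    have := hasDerivAt_integral_of_dominated_loc_of_deriv_le (Metric.ball_mem_nhds l hε)
      (Eventually.of_forall fun z => (hcont z).aestronglyMeasurable)
      hF_int (hcont' l).aestronglyMeasurable hF'_bound hbound_int h_diff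
    exact this.2
  intro lam hlam
  have heq : f =ᶠ[nhds lam] fun z => ∫ φ : ℝ, F z φ := by
    have hopen : IsOpen {z : ℂ | 0 < z.re} := isOpen_lt continuous_const Complex.continuous_re
    filter_upwards [hopen.mem_nhds hlam] with z hz
    exact hf z (le_of_lt hz)
  constructor
  · have hopen : IsOpen {z : ℂ | 0 < z.re} := isOpen_lt continuous_const Complex.continuous_re
    have hd : DifferentiableOn ℂ (fun z => ∫ φ : ℝ, F z φ) {z : ℂ | 0 < z.re} :=
      fun z hz => ((key z hz).differentiableAt).differentiableWithinAt
    have hA : AnalyticAt ℂ (fun z => ∫ φ : ℝ, F z φ) lam :=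
      hd.analyticAt (hopen.mem_nhds hlam)
    exact hA.congr heq.symm
  · exact ((key lam hlam).congr_of_eventuallyEq heq)
end

section
/- Let V be a polynomial of even degree 2k with positive leading coefficient that is nonnegative on ℝ, P a real polynomial, f(λ) = ∫_ℝ P(φ) e^{-φ²/2 - λV(φ)} dφ/√(2π), and α_n = ∫_ℝ (P(φ)(-V(φ))^n / n!) e^{-φ²/2} dφ/√(2π). Then for every N ≥ 0, |f(λ) − Σ_{n=0}^N α_n λ^n| ≤ (|λ|^{N+1}/(N+1)!) · ∫_ℝ |P(φ)| V(φ)^{N+1} e^{-φ²/2} dφ/√(2π) for all λ with Re λ > 0; in particular λ^{-N}(f(λ) − Σ_{n=0}^N α_n λ^n) → 0 as λ → 0 inside the right half-plane. -/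
open MeasureTheory Real Filter Topology Finset

lemma integ_pow_gauss (n : ℕ) : Integrable (fun x : ℝ => x ^ n * Real.exp (-(1/2) * x ^ 2)) := by
  have := integrable_rpow_mul_exp_neg_mul_sq (b := 1/2) (by norm_num) (s := (n : ℝ))
    (by exact_mod_cast lt_of_lt_of_le neg_one_lt_zero (Nat.cast_nonneg n))
  simpa [Real.rpow_natCast] using this

lemma integ_poly_gauss (Q : Polynomial ℝ) :
    Integrable (fun x : ℝ => Q.eval x * Real.exp (-x ^ 2 / 2)) := by
  have h : ∀ x : ℝ, Real.exp (-x ^ 2 / 2) = Real.exp (-(1/2) * x ^ 2) := by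
    intro x; ring_nf
  simp_rw [h]
  induction Q using Polynomial.induction_on' with
  | add p q hp hq => simpa [add_mul, Pi.add_def] using hp.add hq
  | monomial n a =>
    simp only [Polynomial.eval_monomial, mul_assoc]
    exact (integ_pow_gauss n).const_mul a

lemma cexp_deriv (z : ℂ) (t : ℝ) :
    HasDerivAt (fun s : ℝ => Complex.exp (-(s : ℂ) * z)) (-z * Complex.exp (-(t : ℂ) * z)) t := by
  have h1 : HasDerivAt (fun w : ℂ => Complex.exp (-w * z)) (-z * Complex.exp (-(t : ℂ) * z)) (t : ℂ) := by
    have := (((hasDerivAt_id (t : ℂ)).neg.mul_const z).cexp)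
    simpa [mul_comm] using this
  exact h1.comp_ofReal

lemma sum_deriv (z : ℂ) (M : ℕ) (t : ℝ) :
    HasDerivAt (fun s : ℝ => ∑ n ∈ range (M + 1), (-(s : ℂ) * z) ^ n / n.factorial)
      (-z * ∑ n ∈ range M, (-(t : ℂ) * z) ^ n / n.factorial) t := by
  have key : ∀ n ∈ range (M + 1), HasDerivAt
      (fun s : ℝ => (-(s : ℂ) * z) ^ n / n.factorial)
      ((n : ℂ) * (-(t : ℂ) * z) ^ (n - 1) * (-z) / n.factorial) t := by
    intro n _
    have h1 : HasDerivAt (fun w : ℂ => (-w * z) ^ n / n.factorial)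
        ((n : ℂ) * (-(t : ℂ) * z) ^ (n - 1) * (-z) / n.factorial) (t : ℂ) := by
      have h0 : HasDerivAt (fun w : ℂ => -w * z) (-z) (t : ℂ) := by
        simpa using ((hasDerivAt_id (t : ℂ)).neg.mul_const z)
      exact (h0.pow n).div_const _
    exact h1.comp_ofReal
  have hsum : (∑ n ∈ range (M + 1), (n : ℂ) * (-(t : ℂ) * z) ^ (n - 1) * (-z) / n.factorial)
      = -z * ∑ n ∈ range M, (-(t : ℂ) * z) ^ n / n.factorial := by
    rw [Finset.sum_range_succ', Finset.mul_sum]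
    simp only [Nat.cast_zero, zero_mul, zero_div, add_zero]
    refine Finset.sum_congr rfl fun i _ => ?_
    have hfac : ((i + 1).factorial : ℂ) = ((i : ℂ) + 1) * (i.factorial : ℂ) := by
      rw [Nat.factorial_succ]; push_cast; ring
    have h0 : ((i.factorial : ℂ)) ≠ 0 := by exact_mod_cast i.factorial_ne_zero
    have h1 : ((i : ℂ) + 1) ≠ 0 := by exact_mod_cast Nat.cast_add_one_ne_zero (R := ℂ) i
    rw [hfac]
    push_cast
    field_simp
  exact hsum ▸ HasDerivAt.fun_sum key

lemma exp_rem_bound : ∀ (N : ℕ) (z : ℂ), 0 ≤ z.re →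
    ‖Complex.exp (-z) - ∑ n ∈ range (N + 1), (-z) ^ n / n.factorial‖ ≤
      ‖z‖ ^ (N + 1) / (N + 1).factorial := by
  intro N
  induction N with
  | zero =>
    intro z hz
    have hder : ∀ t ∈ Set.uIcc (0:ℝ) 1, HasDerivAt (fun s : ℝ => Complex.exp (-(s : ℂ) * z))
        (-z * Complex.exp (-(t : ℂ) * z)) t := fun t _ => cexp_deriv z t
    have hcont : Continuous fun t : ℝ => -z * Complex.exp (-(t : ℂ) * z) := by
      continuity
    have hint := intervalIntegral.integral_eq_sub_of_hasDerivAt hder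
      (hcont.intervalIntegrable 0 1)
    have heq : Complex.exp (-z) - ∑ n ∈ range 1, (-z) ^ n / n.factorial
        = ∫ t in (0:ℝ)..1, -z * Complex.exp (-(t : ℂ) * z) := by
      rw [hint]; simp
    rw [heq]
    have h := intervalIntegral.norm_integral_le_of_norm_le_const (a := (0:ℝ)) (b := 1)
      (C := ‖z‖) (f := fun t : ℝ => -z * Complex.exp (-(t : ℂ) * z)) ?_
    · simpa using h
    · intro x hx
      rw [Set.uIoc_of_le (by norm_num : (0:ℝ) ≤ 1)] at hx
      rw [norm_mul, norm_neg, Complex.norm_exp]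
      have h2 : (-(x : ℂ) * z).re = -(x * z.re) := by simp
      rw [h2]
      have h3 : Real.exp (-(x * z.re)) ≤ 1 := by
        apply Real.exp_le_one_iff.mpr
        simp only [neg_nonpos]
        exact mul_nonneg hx.1.le hz
      nlinarith [norm_nonneg z]
  | succ N ih =>
    intro z hz
    set F' : ℝ → ℂ := fun t =>
      -z * (Complex.exp (-(t : ℂ) * z) - ∑ n ∈ range (N + 1), (-(t : ℂ) * z) ^ n / n.factorial)
      with hF'
    have hder : ∀ t ∈ Set.uIcc (0:ℝ) 1, HasDerivAt
        (fun s : ℝ => Complex.exp (-(s : ℂ) * z)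
          - ∑ n ∈ range (N + 2), (-(s : ℂ) * z) ^ n / n.factorial) (F' t) t := by
      intro t _
      have := (cexp_deriv z t).fun_sub (sum_deriv z (N + 1) t)
      simpa [hF', mul_sub] using this
    have hcont : Continuous F' := by
      apply Continuous.mul continuous_const
      apply Continuous.sub
      · exact Complex.continuous_exp.comp (by continuity)
      · apply continuous_finset_sum
        intro n _
        apply Continuous.div_const
        exact Continuous.pow (by continuity) n
    have hint := intervalIntegral.integral_eq_sub_of_hasDerivAt hder
      (hcont.intervalIntegrable 0 1)
    have heq : Complex.exp (-z) - ∑ n ∈ range (N + 2), (-z) ^ n / n.factorial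
        = ∫ t in (0:ℝ)..1, F' t := by
      rw [hint]
      have h0 : (∑ n ∈ range (N + 2), (-(0 : ℂ) * z) ^ n / n.factorial) = 1 := by
        rw [Finset.sum_range_succ']
        simp [zero_pow]
      have h1 : Complex.exp (-(0:ℂ) * z) = 1 := by simp
      push_cast
      rw [h0, h1]
      ring_nf
    rw [heq]
    have hbound : ∀ᵐ t ∂(volume.restrict (Set.uIoc (0:ℝ) 1)), ‖F' t‖ ≤
        ‖z‖ ^ (N + 2) / (N + 1).factorial * t ^ (N + 1) := by
      rw [Set.uIoc_of_le (by norm_num : (0:ℝ) ≤ 1)]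
      refine (ae_restrict_mem measurableSet_Ioc).mono fun t ht => ?_
      have htz : ((t : ℂ) * z).re = t * z.re := by simp
      have hre : 0 ≤ ((t : ℂ) * z).re := by rw [htz]; exact mul_nonneg ht.1.le hz
      have := ih ((t : ℂ) * z) hre
      have hnorm : ‖(t : ℂ) * z‖ = t * ‖z‖ := by
        rw [norm_mul, Complex.norm_real, Real.norm_of_nonneg ht.1.le]
      rw [hnorm] at this
      have harg : ∀ n : ℕ, (-((t : ℂ) * z)) ^ n = (-(t : ℂ) * z) ^ n := by
        intro n; ring_nf
      simp only [harg, neg_mul] at this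
      calc ‖F' t‖ = ‖z‖ * ‖Complex.exp (-((t:ℂ) * z)) -
              ∑ n ∈ range (N + 1), (-(t : ℂ) * z) ^ n / n.factorial‖ := by
            rw [hF']
            simp [norm_mul, neg_mul]
        _ ≤ ‖z‖ * ((t * ‖z‖) ^ (N + 1) / (N + 1).factorial) := by
            apply mul_le_mul_of_nonneg_left _ (norm_nonneg z)
            simpa [neg_mul] using this
        _ = ‖z‖ ^ (N + 2) / (N + 1).factorial * t ^ (N + 1) := by
            rw [mul_pow]; ring
    have hginteg : IntervalIntegrable
        (fun t : ℝ => ‖z‖ ^ (N + 2) / (N + 1).factorial * t ^ (N + 1)) volume 0 1 := by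
      exact (continuous_const.mul (continuous_pow (N+1))).intervalIntegrable 0 1
    have h := intervalIntegral.norm_integral_le_abs_of_norm_le hbound hginteg
    have hgint : (∫ t in (0:ℝ)..1, ‖z‖ ^ (N + 2) / (N + 1).factorial * t ^ (N + 1))
        = ‖z‖ ^ (N + 2) / (N + 2).factorial := by
      rw [intervalIntegral.integral_const_mul, integral_pow]
      rw [Nat.factorial_succ (N + 1)]
      push_cast
      have h1 : ((N:ℝ) + 1 + 1) ≠ 0 := by positivity
      have h2 : ((N + 1).factorial : ℝ) ≠ 0 := by exact_mod_cast (N+1).factorial_ne_zero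
      field_simp
      simp
    rw [hgint] at h
    calc ‖∫ t in (0:ℝ)..1, F' t‖ ≤ |‖z‖ ^ (N + 2) / (N + 2).factorial| := h
      _ = ‖z‖ ^ (N + 2) / (N + 2).factorial := by
          rw [abs_of_nonneg]; positivity
      _ = ‖z‖ ^ (N + 1 + 1) / (N + 1 + 1).factorial := rfl


lemma cont_aux (Q : Polynomial ℝ) (c : ℝ) (h : ℝ → ℂ) (hh : Continuous h) :
    Continuous fun φ : ℝ => ((Q.eval φ : ℝ) : ℂ) * ((Real.exp (-φ ^ 2 / 2) : ℝ) : ℂ) / c * h φ := by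
  apply Continuous.mul _ hh
  apply Continuous.div_const
  exact (Complex.continuous_ofReal.comp Q.continuous).mul
    (Complex.continuous_ofReal.comp (Real.continuous_exp.comp (by continuity)))

theorem stmt5 (k : ℕ) (hk : 1 ≤ k) (V P : Polynomial ℝ)
    (hdeg : V.natDegree = 2 * k) (hlead : 0 < V.leadingCoeff)
    (hVpos : ∀ φ : ℝ, 0 ≤ V.eval φ)
    (f : ℂ → ℂ) (α : ℕ → ℂ)
    (hf : ∀ lam : ℂ, 0 ≤ lam.re → f lam =
      ∫ φ : ℝ, ((P.eval φ : ℝ) : ℂ) *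
        Complex.exp (-(φ : ℂ) ^ 2 / 2 - lam * ((V.eval φ : ℝ) : ℂ)) /
          Real.sqrt (2 * π))
    (hα : ∀ n : ℕ, α n =
      ∫ φ : ℝ, ((P.eval φ * (-V.eval φ) ^ n / (Nat.factorial n) : ℝ) : ℂ) *
        Complex.exp (-(φ : ℂ) ^ 2 / 2) / Real.sqrt (2 * π)) :
    ∀ N : ℕ,
      (∀ lam : ℂ, 0 < lam.re →
        ‖f lam - ∑ n ∈ Finset.range (N + 1), α n * lam ^ n‖ ≤
          ‖lam‖ ^ (N + 1) / (Nat.factorial (N + 1) : ℝ) *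
            ∫ φ : ℝ, |P.eval φ| * (V.eval φ) ^ (N + 1) *
              Real.exp (-φ ^ 2 / 2) / Real.sqrt (2 * π)) ∧
      Tendsto (fun lam : ℂ =>
          lam ^ (-(N : ℤ)) * (f lam - ∑ n ∈ Finset.range (N + 1), α n * lam ^ n))
        (𝓝[{lam : ℂ | 0 < lam.re}] 0) (𝓝 0) := by
  intro N
  set c : ℝ := Real.sqrt (2 * π) with hc
  have hcpos : 0 < c := Real.sqrt_pos.mpr (by positivity)
  set g : ℝ → ℂ := fun φ =>
    ((P.eval φ : ℝ) : ℂ) * ((Real.exp (-φ ^ 2 / 2) : ℝ) : ℂ) / c with hg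
  have hexpc : ∀ φ : ℝ, Complex.exp (-(φ : ℂ) ^ 2 / 2)
      = ((Real.exp (-φ ^ 2 / 2) : ℝ) : ℂ) := by
    intro φ
    rw [Complex.ofReal_exp]
    congr 1
    push_cast
    ring
  -- norm of g
  have hgnorm : ∀ φ : ℝ, ‖g φ‖ = |P.eval φ| * Real.exp (-φ ^ 2 / 2) / c := by
    intro φ
    rw [hg]
    simp only [norm_div, norm_mul, Complex.norm_real, Real.norm_eq_abs,
      abs_of_nonneg (Real.exp_pos (-φ ^ 2 / 2)).le, abs_of_nonneg hcpos.le]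
  -- the dominating real functions
  have hDom : ∀ M : ℕ, Integrable (fun φ : ℝ =>
      |P.eval φ| * (V.eval φ) ^ M * Real.exp (-φ ^ 2 / 2) / c) := by
    intro M
    have h1 : Integrable (fun φ : ℝ => |(P * V ^ M).eval φ * Real.exp (-φ ^ 2 / 2)| / c) :=
      ((integ_poly_gauss (P * V ^ M)).abs).div_const c
    refine h1.congr (Eventually.of_forall fun φ => ?_)
    dsimp only
    rw [abs_mul, abs_of_nonneg (Real.exp_pos _).le, Polynomial.eval_mul, Polynomial.eval_pow,
      abs_mul, abs_of_nonneg (pow_nonneg (hVpos φ) M)]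
  -- main pointwise/integral identity for each lam with 0 ≤ re
  have key : ∀ lam : ℂ, 0 ≤ lam.re →
      f lam - ∑ n ∈ Finset.range (N + 1), α n * lam ^ n =
      ∫ φ : ℝ, g φ * (Complex.exp (-(lam * ((V.eval φ : ℝ) : ℂ))) -
        ∑ n ∈ Finset.range (N + 1), (-(lam * ((V.eval φ : ℝ) : ℂ))) ^ n / n.factorial) := by
    intro lam hlam
    have hVc : Continuous fun φ : ℝ => -(lam * ((V.eval φ : ℝ) : ℂ)) :=
      (continuous_const.mul (Complex.continuous_ofReal.comp V.continuous)).neg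
    have hE_int : Integrable (fun φ : ℝ => g φ * Complex.exp (-(lam * ((V.eval φ : ℝ) : ℂ)))) := by
      refine Integrable.mono' ((integ_poly_gauss P).abs.div_const c)
        ((cont_aux P c _ (Complex.continuous_exp.comp hVc)).aestronglyMeasurable)
        (Eventually.of_forall fun φ => ?_)
      rw [norm_mul, hgnorm]
      have h1 : ‖Complex.exp (-(lam * ((V.eval φ : ℝ) : ℂ)))‖ ≤ 1 := by
        rw [Complex.norm_exp, Real.exp_le_one_iff]
        have : (-(lam * ((V.eval φ : ℝ) : ℂ))).re = -(lam.re * V.eval φ) := by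
          simp [Complex.mul_re]
        rw [this, neg_nonpos]
        exact mul_nonneg hlam (hVpos φ)
      calc |P.eval φ| * Real.exp (-φ ^ 2 / 2) / c * ‖Complex.exp _‖
          ≤ |P.eval φ| * Real.exp (-φ ^ 2 / 2) / c * 1 := by
            apply mul_le_mul_of_nonneg_left h1
            positivity
        _ = |P.eval φ * Real.exp (-φ ^ 2 / 2)| / c := by
            rw [mul_one, abs_mul, abs_of_nonneg (Real.exp_pos _).le]
    have hS_int : ∀ n : ℕ, Integrable (fun φ : ℝ =>
        g φ * ((-(lam * ((V.eval φ : ℝ) : ℂ))) ^ n / n.factorial)) := by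
      intro n
      refine Integrable.mono' (((hDom n).const_mul (‖lam‖ ^ n / n.factorial)))
        ((cont_aux P c _ ?_).aestronglyMeasurable) (Eventually.of_forall fun φ => ?_)
      · exact Continuous.div_const (hVc.pow n) _
      · rw [norm_mul, hgnorm, norm_div, norm_pow, norm_neg, norm_mul]
        rw [Complex.norm_real, Real.norm_of_nonneg (hVpos φ)]
        have hnf : ‖((n.factorial : ℕ) : ℂ)‖ = (n.factorial : ℝ) := by
          rw [Complex.norm_natCast]
        rw [hnf, mul_pow]
        apply le_of_eq
        ring
    -- f lam as integral of g * exp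
    have hf' : f lam = ∫ φ : ℝ, g φ * Complex.exp (-(lam * ((V.eval φ : ℝ) : ℂ))) := by
      rw [hf lam hlam]
      congr 1
      funext φ
      rw [sub_eq_add_neg, Complex.exp_add, hexpc φ, hg]
      push_cast
      ring
    -- α n * lam ^ n as integral
    have hα' : ∀ n : ℕ, α n * lam ^ n =
        ∫ φ : ℝ, g φ * ((-(lam * ((V.eval φ : ℝ) : ℂ))) ^ n / n.factorial) := by
      intro n
      rw [hα n, ← integral_mul_const]
      congr 1
      funext φ
      rw [hexpc φ, hg]
      have hfn : ((n.factorial : ℝ) : ℂ) ≠ 0 := by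
        exact_mod_cast (Nat.cast_ne_zero (R := ℝ)).mpr n.factorial_ne_zero
      push_cast
      field_simp
      ring
    rw [hf']
    have hsum : (∑ n ∈ Finset.range (N + 1), α n * lam ^ n) =
        ∫ φ : ℝ, ∑ n ∈ Finset.range (N + 1),
          g φ * ((-(lam * ((V.eval φ : ℝ) : ℂ))) ^ n / n.factorial) := by
      rw [integral_finset_sum _ (fun n _ => hS_int n)]
      exact Finset.sum_congr rfl fun n _ => hα' n
    rw [hsum, ← integral_sub hE_int (integrable_finset_sum _ (fun n _ => hS_int n))]
    congr 1
    funext φ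
    rw [mul_sub, Finset.mul_sum]
  have hbound : ∀ lam : ℂ, 0 ≤ lam.re →
      ‖f lam - ∑ n ∈ Finset.range (N + 1), α n * lam ^ n‖ ≤
        ‖lam‖ ^ (N + 1) / (Nat.factorial (N + 1) : ℝ) *
          ∫ φ : ℝ, |P.eval φ| * (V.eval φ) ^ (N + 1) *
            Real.exp (-φ ^ 2 / 2) / Real.sqrt (2 * π) := by
    intro lam hlam
    rw [key lam hlam]
    have step := norm_integral_le_of_norm_le
      (f := fun φ : ℝ => g φ * (Complex.exp (-(lam * ((V.eval φ : ℝ) : ℂ))) -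
        ∑ n ∈ Finset.range (N + 1), (-(lam * ((V.eval φ : ℝ) : ℂ))) ^ n / n.factorial))
      (((hDom (N + 1)).const_mul (‖lam‖ ^ (N + 1) / ((N + 1).factorial : ℝ))))
      (Eventually.of_forall (fun φ => ?_))
    · rw [integral_const_mul] at step
      exact step
    · rw [norm_mul, hgnorm]
      have hz : (0:ℝ) ≤ (lam * ((V.eval φ : ℝ) : ℂ)).re := by
        have : (lam * ((V.eval φ : ℝ) : ℂ)).re = lam.re * V.eval φ := by
          simp [Complex.mul_re]
        rw [this]
        exact mul_nonneg hlam (hVpos φ)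
      have hrem := exp_rem_bound N (lam * ((V.eval φ : ℝ) : ℂ)) hz
      have hznorm : ‖lam * ((V.eval φ : ℝ) : ℂ)‖ = ‖lam‖ * V.eval φ := by
        rw [norm_mul, Complex.norm_real, Real.norm_of_nonneg (hVpos φ)]
      rw [hznorm] at hrem
      calc |P.eval φ| * Real.exp (-φ ^ 2 / 2) / c * ‖_‖
          ≤ |P.eval φ| * Real.exp (-φ ^ 2 / 2) / c *
            ((‖lam‖ * V.eval φ) ^ (N + 1) / ((N + 1).factorial : ℝ)) := by
            apply mul_le_mul_of_nonneg_left hrem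
            positivity
        _ = ‖lam‖ ^ (N + 1) / ((N + 1).factorial : ℝ) *
            (|P.eval φ| * V.eval φ ^ (N + 1) * Real.exp (-φ ^ 2 / 2) / c) := by
            rw [mul_pow]; ring
  constructor
  · exact fun lam hlam => hbound lam hlam.le
  · set C : ℝ := ∫ φ : ℝ, |P.eval φ| * (V.eval φ) ^ (N + 1) *
      Real.exp (-φ ^ 2 / 2) / Real.sqrt (2 * π) with hC
    apply squeeze_zero_norm'
      (a := fun lam : ℂ => ‖lam‖ * (C / ((N + 1).factorial : ℝ)))
    · filter_upwards [eventually_mem_nhdsWithin] with lam hlam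
      have hre : 0 < lam.re := hlam
      have hne : lam ≠ 0 := fun h => by simp [h] at hre
      have hln : (0:ℝ) < ‖lam‖ := norm_pos_iff.mpr hne
      rw [norm_mul, norm_zpow]
      calc ‖lam‖ ^ (-(N:ℤ)) * ‖f lam - ∑ n ∈ Finset.range (N + 1), α n * lam ^ n‖
          ≤ ‖lam‖ ^ (-(N:ℤ)) * (‖lam‖ ^ (N + 1) / ((N + 1).factorial : ℝ) * C) := by
            apply mul_le_mul_of_nonneg_left (hbound lam hre.le)
            positivity
        _ = ‖lam‖ * (C / ((N + 1).factorial : ℝ)) := by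
            have h1 : ‖lam‖ ^ (-(N:ℤ)) * ‖lam‖ ^ (N + 1) = ‖lam‖ := by
              rw [← zpow_natCast ‖lam‖ (N + 1), ← zpow_add₀ hln.ne']
              norm_num
            calc ‖lam‖ ^ (-(N:ℤ)) * (‖lam‖ ^ (N + 1) / ((N + 1).factorial : ℝ) * C)
                = (‖lam‖ ^ (-(N:ℤ)) * ‖lam‖ ^ (N + 1)) * (C / ((N + 1).factorial : ℝ)) := by
                  ring
              _ = ‖lam‖ * (C / ((N + 1).factorial : ℝ)) := by rw [h1]
    · have : Tendsto (fun lam : ℂ => ‖lam‖ * (C / ((N + 1).factorial : ℝ))) (𝓝 0) (𝓝 0) := by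
        have h0 : Tendsto (fun lam : ℂ => ‖lam‖) (𝓝 0) (𝓝 0) := by
          simpa using (continuous_norm (E := ℂ)).tendsto 0
        simpa using h0.mul_const (C / ((N + 1).factorial : ℝ))
      exact this.mono_left nhdsWithin_le_nhds
end

section
/- For the potential V(φ) = φ^{2k} with k ≥ 1, the partition function Z_0(λ) = ∫_ℝ e^{-φ²/2 - λφ^{2k}} dφ/√(2π) satisfies the linear ODE [∏_{j=0}^{k−1} (2kλ∂_λ + 2j + 1) + ∂_λ] Z_0 = 0 on the open half-plane Re λ > 0. -/
open MeasureTheory Real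

/-- One factor of the operator: `f ↦ 2kλ ∂_λ f + (2j+1) f`. -/
noncomputable def factorOp (k j : ℕ) (f : ℂ → ℂ) : ℂ → ℂ :=
  fun lam => 2 * k * lam * deriv f lam + (2 * j + 1) * f lam

/-- The composed operator `∏_{j=0}^{r-1} (2kλ∂_λ + 2j + 1)`. -/
noncomputable def prodOp (k : ℕ) : ℕ → (ℂ → ℂ) → (ℂ → ℂ)
  | 0, f => f
  | r + 1, f => prodOp k r (factorOp k r f)

open Set

/-! ### Auxiliary definitions and analytic lemmas -/

noncomputable def Ker (k : ℕ) (lam : ℂ) (φ : ℝ) : ℂ :=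
  Complex.exp (-(φ : ℂ) ^ 2 / 2 - lam * (φ : ℂ) ^ (2 * k))

lemma Ker_norm (k : ℕ) (lam : ℂ) (φ : ℝ) (n : ℕ) :
    ‖(φ : ℂ) ^ n * Ker k lam φ‖ = |φ| ^ n * Real.exp (-(φ ^ 2) / 2 - lam.re * φ ^ (2 * k)) := by
  have h0 : -(φ : ℂ) ^ 2 / 2 - lam * (φ : ℂ) ^ (2 * k)
      = ((-(φ ^ 2) / 2 : ℝ) : ℂ) - lam * ((φ ^ (2 * k) : ℝ) : ℂ) := by push_cast; ring
  have h1 : (-(φ : ℂ) ^ 2 / 2 - lam * (φ : ℂ) ^ (2 * k)).re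
      = -(φ ^ 2) / 2 - lam.re * φ ^ (2 * k) := by
    rw [h0]; simp [Complex.mul_re, ← Complex.ofReal_pow]
  rw [norm_mul, Ker, Complex.norm_exp, h1,
    norm_pow, Complex.norm_real, Real.norm_eq_abs]

lemma Ker_norm_le (k : ℕ) {lam : ℂ} (hl : 0 ≤ lam.re) (φ : ℝ) (n : ℕ) :
    ‖(φ : ℂ) ^ n * Ker k lam φ‖ ≤ |φ| ^ n * Real.exp (-(φ ^ 2) / 2) := by
  rw [Ker_norm]
  refine mul_le_mul_of_nonneg_left (Real.exp_le_exp.2 ?_) (by positivity)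
  refine sub_le_self _ (mul_nonneg hl ?_)
  rw [pow_mul]; positivity

lemma gauss_int (n : ℕ) :
    Integrable (fun φ : ℝ => |φ| ^ n * Real.exp (-(φ ^ 2) / 2)) := by
  have h := (integrable_rpow_mul_exp_neg_mul_sq (b := 1/2) (by norm_num)
    (s := n) (lt_of_lt_of_le neg_one_lt_zero (Nat.cast_nonneg n))).abs
  refine h.congr (ae_of_all _ fun x => ?_)
  simp only [Real.rpow_natCast]
  rw [abs_mul, abs_pow, abs_of_pos (Real.exp_pos _)]
  ring_nf

lemma Ker_cont (k : ℕ) (lam : ℂ) (n : ℕ) :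
    Continuous (fun φ : ℝ => (φ : ℂ) ^ n * Ker k lam φ) := by
  unfold Ker; fun_prop

lemma Ker_integrable (k : ℕ) {lam : ℂ} (hl : 0 ≤ lam.re) (n : ℕ) :
    Integrable (fun φ : ℝ => (φ : ℂ) ^ n * Ker k lam φ) :=
  (gauss_int n).mono' (Ker_cont k lam n).aestronglyMeasurable
    (ae_of_all _ fun φ => Ker_norm_le k hl φ n)

noncomputable def Jn (k n : ℕ) (lam : ℂ) : ℂ := ∫ φ : ℝ, (φ : ℂ) ^ n * Ker k lam φ

noncomputable def Fm (k m : ℕ) (lam : ℂ) : ℂ :=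
  ∫ φ : ℝ, (φ : ℂ) ^ (2 * m) * Ker k lam φ / Real.sqrt (2 * π)

lemma Fm_eq (k m : ℕ) (lam : ℂ) : Fm k m lam = Jn k (2 * m) lam / Real.sqrt (2 * π) := by
  rw [Fm, Jn, integral_div]

lemma Ker_hasDerivAt_phi (k : ℕ) (hk : 1 ≤ k) (lam : ℂ) (m : ℕ) (φ : ℝ) :
    HasDerivAt (fun x : ℝ => ((x : ℂ)) ^ (2 * m + 1) * Ker k lam x)
      ((2 * m + 1 : ℂ) * ((φ : ℂ) ^ (2 * m) * Ker k lam φ)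
        - (φ : ℂ) ^ (2 * m + 2) * Ker k lam φ
        - (2 * k * lam) * ((φ : ℂ) ^ (2 * m + 2 * k) * Ker k lam φ)) φ := by
  have h1 : HasDerivAt (fun z : ℂ => z ^ (2 * m + 1))
      (((2 * m + 1 : ℕ) : ℂ) * (φ : ℂ) ^ (2 * m)) (φ : ℂ) := by
    simpa using hasDerivAt_pow (2 * m + 1) (φ : ℂ)
  have h2 : HasDerivAt (fun z : ℂ => -z ^ 2 / 2 - lam * z ^ (2 * k))
      (-(2 * (φ : ℂ) ^ 1) / 2 - lam * (((2 * k : ℕ) : ℂ) * (φ : ℂ) ^ (2 * k - 1))) (φ : ℂ) := by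
    have ha : HasDerivAt (fun z : ℂ => -z ^ 2 / 2) (-(2 * (φ : ℂ) ^ 1) / 2) (φ : ℂ) := by
      simpa using ((hasDerivAt_pow 2 (φ : ℂ)).neg.div_const 2)
    exact ha.sub ((hasDerivAt_pow (2 * k) (φ : ℂ)).const_mul lam)
  have h3 := h1.mul h2.cexp
  have h4 := h3.comp_ofReal (z := φ)
  have e1 : (φ : ℂ) ^ (2 * m + 1) * (φ : ℂ) ^ 1 = (φ : ℂ) ^ (2 * m + 2) := by
    rw [← pow_add]
  have e2 : (φ : ℂ) ^ (2 * m + 1) * (φ : ℂ) ^ (2 * k - 1) = (φ : ℂ) ^ (2 * m + 2 * k) := by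
    rw [← pow_add]; congr 1; omega
  convert h4 using 1
  · rfl
  rw [Ker]
  push_cast
  rw [← e1, ← e2]
  ring

lemma ibp (k : ℕ) (hk : 1 ≤ k) {lam : ℂ} (hl : 0 < lam.re) (m : ℕ) :
    (2 * m + 1 : ℂ) * Jn k (2 * m) lam
      = Jn k (2 * m + 2) lam + 2 * k * lam * Jn k (2 * m + 2 * k) lam := by
  have hl' := hl.le
  have i1 := Ker_integrable k hl' (2 * m)
  have i2 := Ker_integrable k hl' (2 * m + 2)
  have i3 := Ker_integrable k hl' (2 * m + 2 * k)
  have h0 : (∫ φ : ℝ, ((2 * m + 1 : ℂ) * ((φ : ℂ) ^ (2 * m) * Ker k lam φ)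
        - (φ : ℂ) ^ (2 * m + 2) * Ker k lam φ
        - (2 * k * lam) * ((φ : ℂ) ^ (2 * m + 2 * k) * Ker k lam φ))) = 0 :=
    integral_eq_zero_of_hasDerivAt_of_integrable
      (fun φ => Ker_hasDerivAt_phi k hk lam m φ)
      (((i1.const_mul _).sub i2).sub (i3.const_mul _))
      (Ker_integrable k hl' (2 * m + 1))
  have ha := integral_sub ((i1.const_mul ((2 * m + 1 : ℂ))).sub i2)
    (i3.const_mul (2 * (k : ℂ) * lam))
  have hb := integral_sub (i1.const_mul ((2 * m + 1 : ℂ))) i2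
  simp only [Pi.sub_apply] at ha
  rw [ha, hb, integral_const_mul, integral_const_mul] at h0
  rw [Jn, Jn, Jn]
  linear_combination h0

lemma Fm_hasDerivAt (k : ℕ) {lam : ℂ} (hl : 0 < lam.re) (m : ℕ) :
    HasDerivAt (Fm k m) (-(Fm k (m + k) lam)) lam := by
  have key := (hasDerivAt_integral_of_dominated_loc_of_deriv_le (μ := volume)
      (F := fun x (φ : ℝ) => (φ : ℂ) ^ (2 * m) * Ker k x φ / Real.sqrt (2 * π))
      (F' := fun x (φ : ℝ) => -((φ : ℂ) ^ (2 * (m + k)) * Ker k x φ / Real.sqrt (2 * π)))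
      (x₀ := lam) (s := Metric.ball lam lam.re)
      (bound := fun φ => |φ| ^ (2 * (m + k)) * Real.exp (-(φ ^ 2) / 2) / Real.sqrt (2 * π))
      (Metric.ball_mem_nhds lam hl)
      (Filter.Eventually.of_forall fun x =>
        ((Ker_cont k x (2 * m)).div_const _).aestronglyMeasurable)
      ((Ker_integrable k hl.le (2 * m)).div_const _)
      (((Ker_cont k lam (2 * (m + k))).div_const _).neg.aestronglyMeasurable)
      ?_ ((gauss_int _).div_const _) ?_).2
  · rw [show (∫ φ : ℝ, -((φ : ℂ) ^ (2 * (m + k)) * Ker k lam φ / Real.sqrt (2 * π)))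
        = -(Fm k (m + k) lam) by rw [integral_neg]; rfl] at key
    exact key
  · refine ae_of_all _ fun φ x hx => ?_
    have hxre : 0 ≤ x.re := by
      have h1 : dist x lam < lam.re := Metric.mem_ball.1 hx
      have h2 : |(x - lam).re| ≤ ‖x - lam‖ := Complex.abs_re_le_norm _
      rw [Complex.dist_eq] at h1
      rw [Complex.sub_re] at h2
      have := abs_le.1 h2
      linarith [this.1]
    rw [norm_neg, norm_div]
    have hs : ‖((Real.sqrt (2 * π) : ℝ) : ℂ)‖ = Real.sqrt (2 * π) := by
      rw [Complex.norm_real, Real.norm_eq_abs, abs_of_nonneg (Real.sqrt_nonneg _)]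
    rw [hs]
    have hsp : 0 < Real.sqrt (2 * π) := Real.sqrt_pos.2 (by positivity)
    exact (div_le_div_iff_of_pos_right hsp).2 (Ker_norm_le k hxre φ (2 * (m + k)))
  · refine ae_of_all _ fun φ x hx => ?_
    have hd : HasDerivAt (fun y : ℂ => -(φ : ℂ) ^ 2 / 2 - y * (φ : ℂ) ^ (2 * k))
        (-((φ : ℂ) ^ (2 * k))) x := by
      simpa using (hasDerivAt_mul_const (c := (φ : ℂ) ^ (2 * k)) (x := x)).const_sub
        (-(φ : ℂ) ^ 2 / 2)
    have hd2 := ((hd.cexp.const_mul ((φ : ℂ) ^ (2 * m))).div_const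
      ((Real.sqrt (2 * π) : ℝ) : ℂ))
    have e : (φ : ℂ) ^ (2 * (m + k)) = (φ : ℂ) ^ (2 * m) * (φ : ℂ) ^ (2 * k) := by
      rw [← pow_add]; congr 1; ring
    convert hd2 using 1
    · rfl
    simp only [Ker, e]
    unfold Ker
    ring

lemma fm_step_val (k : ℕ) (hk : 1 ≤ k) {lam : ℂ} (hl : 0 < lam.re) (r : ℕ) :
    2 * (k : ℂ) * lam * -(Fm k (r + k) lam) + (2 * (r : ℂ) + 1) * Fm k r lam
      = Fm k (r + 1) lam := by
  have h := ibp k hk hl r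
  have e2 : Fm k (r + 1) lam = Jn k (2 * r + 2) lam / Real.sqrt (2 * π) := by
    have : 2 * (r + 1) = 2 * r + 2 := by ring
    rw [Fm_eq, this]
  have e3 : Fm k (r + k) lam = Jn k (2 * r + 2 * k) lam / Real.sqrt (2 * π) := by
    have : 2 * (r + k) = 2 * r + 2 * k := by ring
    rw [Fm_eq, this]
  rw [e3, e2, Fm_eq]
  linear_combination h / ((Real.sqrt (2 * π) : ℝ) : ℂ)

/-! ### The commutation machinery -/

def Hs : Set ℂ := {z | 0 < z.re}

lemma isOpen_Hs : IsOpen Hs := isOpen_lt continuous_const Complex.continuous_re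

lemma Fm_analytic (k m : ℕ) : AnalyticOnNhd ℂ (Fm k m) Hs :=
  (DifferentiableOn.analyticOnNhd
    (fun z hz => (Fm_hasDerivAt k hz m).differentiableAt.differentiableWithinAt) isOpen_Hs)

lemma factorOp_congr {k j : ℕ} {f g : ℂ → ℂ} (h : EqOn f g Hs) :
    EqOn (factorOp k j f) (factorOp k j g) Hs := by
  intro z hz
  have hev : f =ᶠ[nhds z] g := h.eventuallyEq_of_mem (isOpen_Hs.mem_nhds hz)
  simp only [factorOp, hev.deriv_eq, h hz]

lemma prodOp_congr (k : ℕ) : ∀ (r : ℕ) {f g : ℂ → ℂ}, EqOn f g Hs →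
    EqOn (prodOp k r f) (prodOp k r g) Hs
  | 0, _, _, h => h
  | r + 1, _, _, h => prodOp_congr k r (factorOp_congr h)

lemma factorOp_analytic {f : ℂ → ℂ} (hf : AnalyticOnNhd ℂ f Hs) (k j : ℕ) :
    AnalyticOnNhd ℂ (factorOp k j f) Hs := by
  unfold factorOp
  exact ((analyticOnNhd_const.mul analyticOnNhd_id).mul (hf.deriv_of_isOpen isOpen_Hs)).add
    (analyticOnNhd_const.mul hf)

lemma factorOp_comm {k : ℕ} {f : ℂ → ℂ} (hf : AnalyticOnNhd ℂ f Hs) (a b : ℕ) :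
    EqOn (factorOp k a (factorOp k b f)) (factorOp k b (factorOp k a f)) Hs := by
  intro z hz
  have h1 : HasDerivAt f (deriv f z) z := (hf z hz).differentiableAt.hasDerivAt
  have h2 : HasDerivAt (deriv f) (deriv (deriv f) z) z :=
    ((hf.deriv_of_isOpen isOpen_Hs) z hz).differentiableAt.hasDerivAt
  have key : ∀ j : ℕ, deriv (factorOp k j f) z
      = 2 * k * deriv f z + 2 * k * z * deriv (deriv f) z + (2 * j + 1) * deriv f z := by
    intro j
    have hx : HasDerivAt (fun x : ℂ => 2 * (k : ℂ) * x) (2 * (k : ℂ)) z := by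
      simpa using (hasDerivAt_id z).const_mul (2 * (k : ℂ))
    have hmul : HasDerivAt (fun x => 2 * (k : ℂ) * x * deriv f x)
        (2 * (k : ℂ) * deriv f z + 2 * (k : ℂ) * z * deriv (deriv f) z) z := by
      exact hx.mul h2
    exact (hmul.add (h1.const_mul ((2 * (j : ℂ) + 1)))).deriv
  have e1 := key b
  have e2 := key a
  simp only [factorOp] at e1 e2 ⊢
  rw [e1, e2]
  ring

lemma prodOp_swap (k : ℕ) : ∀ (r : ℕ) {f : ℂ → ℂ}, AnalyticOnNhd ℂ f Hs → ∀ j : ℕ,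
    EqOn (prodOp k r (factorOp k j f)) (factorOp k j (prodOp k r f)) Hs := by
  intro r
  induction r with
  | zero => intro f hf j z hz; rfl
  | succ r ih =>
    intro f hf j z hz
    show prodOp k r (factorOp k r (factorOp k j f)) z
      = factorOp k j (prodOp k r (factorOp k r f)) z
    have h1 := prodOp_congr k r (factorOp_comm (k := k) hf r j) hz
    exact h1.trans (ih (factorOp_analytic hf k r) j hz)

lemma chain (k : ℕ) (hk : 1 ≤ k) {Z : ℂ → ℂ} (hZ0 : EqOn Z (Fm k 0) Hs) :
    ∀ r, EqOn (prodOp k r Z) (Fm k r) Hs := by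
  have hZan : AnalyticOnNhd ℂ Z Hs := fun z hz =>
    ((Fm_analytic k 0) z hz).congr ((hZ0.eventuallyEq_of_mem (isOpen_Hs.mem_nhds hz)).symm)
  intro r
  induction r with
  | zero => exact hZ0
  | succ r ih =>
    intro z hz
    show prodOp k r (factorOp k r Z) z = Fm k (r + 1) z
    rw [prodOp_swap k r hZan r hz, factorOp_congr ih hz]
    have hd := (Fm_hasDerivAt k hz r).deriv
    simp only [factorOp, hd]
    exact fm_step_val k hk hz r

theorem stmt9 (k : ℕ) (hk : 1 ≤ k) (Z₀ : ℂ → ℂ)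
    (hZ : ∀ lam : ℂ, 0 < lam.re → Z₀ lam =
      ∫ φ : ℝ, Complex.exp (-(φ : ℂ) ^ 2 / 2 - lam * (φ : ℂ) ^ (2 * k)) /
        Real.sqrt (2 * π)) :
    ∀ lam : ℂ, 0 < lam.re →
      prodOp k k Z₀ lam + deriv Z₀ lam = 0 := by
  intro lam hlam
  have hZ0 : EqOn Z₀ (Fm k 0) Hs := by
    intro z hz
    rw [hZ z hz]
    simp only [Fm, Ker, Nat.mul_zero, pow_zero, one_mul]
  have hmain := chain k hk hZ0 k hlam
  have hev : Z₀ =ᶠ[nhds lam] Fm k 0 := hZ0.eventuallyEq_of_mem (isOpen_Hs.mem_nhds hlam)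
  have hder : deriv Z₀ lam = -(Fm k k lam) := by
    rw [hev.deriv_eq, (Fm_hasDerivAt k hlam 0).deriv]
    norm_num
  rw [hmain, hder]
  ring
end

section
/- If L is a nontrivial discrete additive subgroup (lattice) of ℂ that is invariant under rotation by angle 2π/(k−1) about the origin, with k ≥ 3, then k ∈ {3, 4, 5, 7} (crystallographic restriction: the rotation order k−1 must be 2, 3, 4, or 6). -/
open Real

private lemma rat_den_one (q : ℚ) (m : ℤ) (hm : m ≠ 0)
    (h : ∀ j : ℕ, ∃ mj : ℤ, (m : ℚ) * q ^ j = mj) : q.den = 1 := by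
  by_contra hd
  have hd2 : 2 ≤ q.den := by
    have := q.den_pos
    omega
  have key : ∀ j : ℕ, (q.den : ℕ) ^ j ∣ m.natAbs := by
    intro j
    obtain ⟨mj, hmj⟩ := h j
    have hq : (q.num : ℚ) / (q.den : ℚ) = q := q.num_div_den
    have hden0 : ((q.den : ℚ)) ≠ 0 := by
      exact_mod_cast q.den_pos.ne'
    have heq : (m : ℚ) * (q.num : ℚ) ^ j = (mj : ℚ) * (q.den : ℚ) ^ j := by
      rw [← hq] at hmj
      field_simp at hmj
      rw [← hmj, div_pow, mul_assoc, div_mul_cancel₀ _ (pow_ne_zero _ hden0)]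
    have heqz : m * q.num ^ j = mj * (q.den : ℤ) ^ j := by exact_mod_cast heq
    have hdvd : ((q.den : ℤ)) ^ j ∣ m * q.num ^ j := ⟨mj, by linarith [heqz]⟩
    have hdvdn : q.den ^ j ∣ m.natAbs * q.num.natAbs ^ j := by
      have := Int.natAbs_dvd_natAbs.mpr hdvd
      simpa [Int.natAbs_mul, Int.natAbs_pow] using this
    have hcop : Nat.Coprime (q.den ^ j) (q.num.natAbs ^ j) :=
      Nat.Coprime.pow _ _ q.reduced.symm
    exact Nat.Coprime.dvd_of_dvd_mul_right hcop hdvdn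
  have hmpos : 0 < m.natAbs := Int.natAbs_pos.mpr hm
  have h1 := key m.natAbs
  have h2 : q.den ^ m.natAbs ≤ m.natAbs := Nat.le_of_dvd hmpos h1
  have h3 : m.natAbs < 2 ^ m.natAbs := Nat.lt_two_pow_self
  have h4 : 2 ^ m.natAbs ≤ q.den ^ m.natAbs := Nat.pow_le_pow_left hd2 _
  omega

private lemma cancel_pi {x y : ℝ} (h : π * x = π * y) : x = y :=
  mul_left_cancel₀ Real.pi_ne_zero h

theorem stmt19 (k : ℕ) (hk : 3 ≤ k) (L : AddSubgroup ℂ) (hL : L ≠ ⊥)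
    (hdisc : ∃ ε : ℝ, 0 < ε ∧ ∀ z ∈ L, z ≠ 0 → ε ≤ ‖z‖)
    (hrot : ∀ z ∈ L, Complex.exp (2 * π * Complex.I / ((k : ℂ) - 1)) * z ∈ L) :
    k = 3 ∨ k = 4 ∨ k = 5 ∨ k = 7 := by
  obtain ⟨ε, hε, hsep⟩ := hdisc
  set n : ℕ := k - 1 with hn
  have hn2 : 2 ≤ n := by omega
  have hkn : ((k : ℂ) - 1) = (n : ℂ) := by
    have hk' : k = n + 1 := by omega
    rw [hk']; push_cast; ring
  have hnR : ((n : ℝ)) ≠ 0 := by positivity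
  have hnC : ((n : ℂ)) ≠ 0 := Nat.cast_ne_zero.mpr (by omega)
  set ζ : ℂ := Complex.exp (2 * π * Complex.I / n) with hζ
  have hrot' : ∀ z ∈ L, ζ * z ∈ L := by
    intro z hz
    have := hrot z hz
    rwa [hkn] at this
  have hζ0 : ζ ≠ 0 := Complex.exp_ne_zero _
  have hζn : ζ ^ n = 1 := by
    rw [hζ, ← Complex.exp_nat_mul]
    have harg : (n : ℂ) * (2 * π * Complex.I / n) = 2 * π * Complex.I := by
      field_simp
    rw [harg, Complex.exp_two_pi_mul_I]
  set t : ℝ := 2 * Real.cos (2 * π / n) with htdef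
  have hkey : (t : ℂ) = ζ + ζ ^ (n - 1) := by
    have hpow : ζ ^ (n - 1) = ζ⁻¹ := by
      have h1 : ζ ^ (n - 1) * ζ = 1 := by
        rw [← pow_succ, show n - 1 + 1 = n by omega, hζn]
      field_simp at h1 ⊢
      linear_combination h1
    have harg : 2 * (π : ℂ) * Complex.I / n = ((2 * π / n : ℝ) : ℂ) * Complex.I := by
      push_cast; ring
    rw [hpow, hζ, harg, ← Complex.exp_neg, ← neg_mul, ← Complex.two_cos, htdef]
    push_cast [Complex.ofReal_cos]
    norm_num
  have hpowmem : ∀ (m : ℕ), ∀ z ∈ L, ζ ^ m * z ∈ L := by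
    intro m
    induction m with
    | zero => intro z hz; simpa using hz
    | succ m ih =>
      intro z hz
      have := hrot' _ (ih z hz)
      rw [pow_succ]
      convert this using 1
      ring
  have htz : ∀ z ∈ L, (t : ℂ) * z ∈ L := by
    intro z hz
    rw [hkey, add_mul]
    exact L.add_mem (hrot' z hz) (hpowmem (n - 1) z hz)
  obtain ⟨⟨z₀, hz₀L⟩, hz₀'⟩ := AddSubgroup.ne_bot_iff_exists_ne_zero.mp hL
  have hz₀ : z₀ ≠ 0 := by simpa [Subtype.ext_iff] using hz₀'
  set M : AddSubgroup ℝ :=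
    { carrier := {c : ℝ | (c : ℂ) * z₀ ∈ L}
      zero_mem' := by simpa using L.zero_mem
      add_mem' := by
        intro a b ha hb
        simp only [Set.mem_setOf_eq] at *
        push_cast
        rw [add_mul]
        exact L.add_mem ha hb
      neg_mem' := by
        intro a ha
        simp only [Set.mem_setOf_eq] at *
        push_cast
        rw [neg_mul]
        exact L.neg_mem ha } with hM
  have hM1 : (1 : ℝ) ∈ M := by
    show ((1 : ℝ) : ℂ) * z₀ ∈ L
    simpa using hz₀L
  have hMt : ∀ c ∈ M, t * c ∈ M := by
    intro c hc
    show ((t * c : ℝ) : ℂ) * z₀ ∈ L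
    push_cast
    rw [mul_assoc]
    exact htz _ hc
  have hMpow : ∀ j : ℕ, t ^ j ∈ M := by
    intro j
    induction j with
    | zero => simpa using hM1
    | succ j ih => rw [pow_succ']; exact hMt _ ih
  set δ : ℝ := ε / ‖z₀‖ with hδ
  have hz₀n : 0 < ‖z₀‖ := norm_pos_iff.mpr hz₀
  have hδpos : 0 < δ := div_pos hε hz₀n
  have hMd : ∀ c ∈ M, c ≠ 0 → δ ≤ |c| := by
    intro c hc hc0
    have hne : ((c : ℝ) : ℂ) * z₀ ≠ 0 :=
      mul_ne_zero (by exact_mod_cast hc0) hz₀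
    have := hsep _ hc hne
    rw [norm_mul, Complex.norm_real] at this
    rw [hδ, div_le_iff₀ hz₀n]
    calc ε ≤ ‖c‖ * ‖z₀‖ := this
      _ = |c| * ‖z₀‖ := by rw [Real.norm_eq_abs]
  rcases AddSubgroup.dense_or_cyclic M with hdense | ⟨a, ha⟩
  · exfalso
    obtain ⟨c, hcball, hcM⟩ := Metric.dense_iff.mp hdense (δ / 2) (δ / 2) (by positivity)
    have hcd : |c - δ / 2| < δ / 2 := by
      simpa [Real.dist_eq] using hcball
    have hc1 : 0 < c := by
      cases abs_lt.mp hcd; linarith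
    have hc2 : c < δ := by
      cases abs_lt.mp hcd; linarith
    have := hMd c hcM hc1.ne'
    rw [abs_of_pos hc1] at this
    linarith
  · -- cyclic case
    have hmem : ∀ c ∈ M, ∃ m : ℤ, m • a = c := by
      intro c hc
      rw [ha] at hc
      exact AddSubgroup.mem_closure_singleton.mp hc
    obtain ⟨m₀, hm₀⟩ := hmem 1 hM1
    have hm₀0 : m₀ ≠ 0 := by
      intro h
      rw [h] at hm₀
      simp at hm₀
    have hm₀R : ((m₀ : ℝ)) ≠ 0 := Int.cast_ne_zero.mpr hm₀0
    have hmj : ∀ j : ℕ, ∃ mj : ℤ, (m₀ : ℝ) * t ^ j = mj := by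
      intro j
      obtain ⟨mj, hmjd⟩ := hmem (t ^ j) (hMpow j)
      refine ⟨mj, ?_⟩
      rw [zsmul_eq_mul] at hm₀ hmjd
      rw [← hmjd]
      linear_combination (mj : ℝ) * hm₀
    obtain ⟨m₁, hm₁⟩ := by exact hmj 1
    set q : ℚ := (m₁ : ℚ) / (m₀ : ℚ) with hq
    have hqt : (q : ℝ) = t := by
      rw [hq, Rat.cast_div, Rat.cast_intCast, Rat.cast_intCast]
      rw [pow_one] at hm₁
      field_simp
      linarith [hm₁]
    have hqint : ∀ j : ℕ, ∃ mj : ℤ, (m₀ : ℚ) * q ^ j = mj := by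
      intro j
      obtain ⟨mj, hmjd⟩ := hmj j
      refine ⟨mj, ?_⟩
      have : (((m₀ : ℚ) * q ^ j : ℚ) : ℝ) = ((mj : ℚ) : ℝ) := by
        push_cast
        rw [hqt]
        exact_mod_cast hmjd
      exact_mod_cast this
    have hden := rat_den_one q m₀ hm₀0 hqint
    have hqnum : ((q.num : ℚ)) = q := by
      rw [← q.num_div_den, hden]; norm_num
    set N : ℤ := q.num with hN
    have htN : t = (N : ℝ) := by
      rw [← hqt, ← hqnum]
      push_cast
      ring
    -- bounds on N
    have hcos1 : Real.cos (2 * π / n) ≤ 1 := Real.cos_le_one _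
    have hcos2 : -1 ≤ Real.cos (2 * π / n) := Real.neg_one_le_cos _
    have hN2 : -2 ≤ N := by
      have : (-2 : ℝ) ≤ (N : ℝ) := by rw [← htN, htdef]; linarith
      exact_mod_cast this
    have hN2' : N ≤ 2 := by
      have : (N : ℝ) ≤ 2 := by rw [← htN, htdef]; linarith
      exact_mod_cast this
    -- cos θ = N / 2
    set θ : ℝ := 2 * π / n with hθ
    have hcosN : Real.cos θ = (N : ℝ) / 2 := by
      have : t = 2 * Real.cos θ := htdef
      rw [htN] at this
      linarith
    have hπ := Real.pi_pos
    have hθpos : 0 < θ := by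
      rw [hθ]
      positivity
    have hθle : θ ≤ π := by
      rw [hθ, div_le_iff₀ (by positivity)]
      have : (2 : ℝ) ≤ (n : ℝ) := by exact_mod_cast hn2
      nlinarith
    have hθmem : θ ∈ Set.Icc 0 π := ⟨hθpos.le, hθle⟩
    have hcos23 : Real.cos (2 * π / 3) = -(1 / 2) := by
      rw [show (2 * π / 3 : ℝ) = π - π / 3 by ring, Real.cos_pi_sub,
        Real.cos_pi_div_three]
    interval_cases N
    · -- N = -2 : θ = π, n = 2, k = 3
      have hθπ : θ = π := Real.injOn_cos hθmem ⟨le_refl π |>.trans_lt' hπ |>.le, le_refl π⟩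
        (by rw [hcosN, Real.cos_pi]; norm_num)
      have h1 : 2 * π = π * (n : ℝ) := by
        rw [hθ, div_eq_iff hnR] at hθπ
        linarith
      have h2 : (n : ℝ) = 2 := cancel_pi (by linarith)
      have : n = 2 := by exact_mod_cast h2
      omega
    · -- N = -1 : θ = 2π/3, n = 3, k = 4
      have hθv : θ = 2 * π / 3 := Real.injOn_cos hθmem ⟨by positivity, by linarith⟩
        (by rw [hcosN, hcos23]; norm_num)
      have h1 : 2 * π = 2 * π / 3 * (n : ℝ) := by
        rw [hθ, div_eq_iff hnR] at hθv
        linarith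
      have h2 : (n : ℝ) = 3 := cancel_pi (by linarith)
      have : n = 3 := by exact_mod_cast h2
      omega
    · -- N = 0 : θ = π/2, n = 4, k = 5
      have hθv : θ = π / 2 := Real.injOn_cos hθmem ⟨by positivity, by linarith⟩
        (by rw [hcosN, Real.cos_pi_div_two]; norm_num)
      have h1 : 2 * π = π / 2 * (n : ℝ) := by
        rw [hθ, div_eq_iff hnR] at hθv
        linarith
      have h2 : (n : ℝ) = 4 := cancel_pi (by linarith)
      have : n = 4 := by exact_mod_cast h2
      omega
    · -- N = 1 : θ = π/3, n = 6, k = 7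
      have hθv : θ = π / 3 := Real.injOn_cos hθmem ⟨by positivity, by linarith⟩
        (by rw [hcosN, Real.cos_pi_div_three]; norm_num)
      have h1 : 2 * π = π / 3 * (n : ℝ) := by
        rw [hθ, div_eq_iff hnR] at hθv
        linarith
      have h2 : (n : ℝ) = 6 := cancel_pi (by linarith)
      have : n = 6 := by exact_mod_cast h2
      omega
    · -- N = 2 : cos θ = 1, impossible
      exfalso
      have hθ0 : θ = 0 := Real.injOn_cos hθmem ⟨le_refl 0, hπ.le⟩
        (by rw [hcosN, Real.cos_zero]; norm_num)
      linarith
end
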